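/- For every integer k ≥ 2, the matrix R_k is invertible over ℚ and its inverse is given entrywise by (R_k^{-1})_{ij} = min{i,j} − ij/(k−1) for all 1 ≤ i, j ≤ k. -/

import Mathlib

lemma sumA {k : ℕ} (p : ℕ) (g : Fin k → ℚ) :
    (∑ l : Fin k, if (l : ℕ) = p then g l else 0) =
      if h : p < k then g ⟨p, h⟩ else 0 := by
  split_ifs with h
  · rw [Finset.sum_eq_single (⟨p, h⟩ : Fin k)]
    · simp
    · intro b _ hb
      rw [if_neg fun hh => hb (Fin.ext hh)]
    · simp
  · apply Finset.sum_eq_zero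
    intro l _
    have := l.isLt
    rw [if_neg (by omega)]

lemma sumB {k : ℕ} (p : ℕ) (g : Fin k → ℚ) :
    (∑ l : Fin k, if (l : ℕ) + 1 = p then g l else 0) =
      if h : 1 ≤ p ∧ p - 1 < k then g ⟨p - 1, h.2⟩ else 0 := by
  split_ifs with h
  · rw [Finset.sum_eq_single (⟨p - 1, h.2⟩ : Fin k)]
    · rw [if_pos (by simp; omega)]
    · intro b _ hb
      rw [if_neg]
      intro hh
      exact hb (Fin.ext (by simp; omega))
    · simp
  · apply Finset.sum_eq_zero
    intro l _
    have := l.isLt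
    rw [if_neg (by omega)]

theorem stmt_5 (k : ℕ) (hk : 2 ≤ k) (R M : Matrix (Fin k) (Fin k) ℚ)
    (hR : ∀ i j : Fin k, R i j =
      if (i : ℕ) = (j : ℕ) then (if (i : ℕ) + 1 = k then 0 else 2)
      else if (i : ℕ) + 1 = (j : ℕ) ∨ (j : ℕ) + 1 = (i : ℕ) then -1
      else 0)
    (hM : ∀ i j : Fin k, M i j =
      ((min ((i : ℕ) + 1) ((j : ℕ) + 1) : ℕ) : ℚ) -
        (((i : ℕ) : ℚ) + 1) * (((j : ℕ) : ℚ) + 1) / ((k : ℚ) - 1)) :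
    R * M = 1 ∧ M * R = 1 := by
  have hkq : (2 : ℚ) ≤ (k : ℚ) := by exact_mod_cast hk
  have hk1 : ((k : ℚ) - 1) ≠ 0 := by intro h; linarith
  have main : R * M = 1 := by
    ext i j
    rw [Matrix.mul_apply, Matrix.one_apply]
    have expand : ∀ l : Fin k, R i l * M l j =
        (if (l : ℕ) = (i : ℕ) then (if (i : ℕ) + 1 = k then 0 else 2) * M l j else 0) +
        ((if (l : ℕ) + 1 = (i : ℕ) then -(M l j) else 0) +
         (if (l : ℕ) = (i : ℕ) + 1 then -(M l j) else 0)) := by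
      intro l
      rw [hR]
      split_ifs <;> first | ring1 | (exfalso; omega)
    rw [Finset.sum_congr rfl fun l _ => expand l, Finset.sum_add_distrib,
      Finset.sum_add_distrib, sumA, sumB, sumA, dif_pos i.isLt]
    have hii := i.isLt
    have hjj := j.isLt
    by_cases hlast : (i : ℕ) + 1 = k
    · rw [if_pos hlast, dif_pos (show 1 ≤ (i : ℕ) ∧ (i : ℕ) - 1 < k by omega),
        dif_neg (by omega)]
      simp only [hM, Fin.eta]
      have h1 : (i : ℕ) - 1 + 1 = (i : ℕ) := by omega
      simp only [h1]
      have hkc : ((k : ℚ)) = ((i : ℕ) : ℚ) + 1 := by exact_mod_cast hlast.symm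
      have hi0' : ((i : ℕ) : ℚ) ≠ 0 := by
        have : 1 ≤ (i : ℕ) := by omega
        exact_mod_cast Nat.one_le_iff_ne_zero.mp this
      rcases Nat.lt_trichotomy (j : ℕ) (i : ℕ) with hij | hij | hij
      · rw [if_neg (by intro h; subst h; omega),
          show min ((i : ℕ)) ((j : ℕ) + 1) = (j : ℕ) + 1 from by omega,
          Nat.cast_sub (show 1 ≤ (i : ℕ) by omega)]
        push_cast
        rw [hkc]
        field_simp
        try ring
        field_simp
        ring
      · have hj : (j : ℕ) = (i : ℕ) := hij
        rw [if_pos (Fin.ext hij.symm)]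
        simp only [hj]
        rw [show min ((i : ℕ)) ((i : ℕ) + 1) = (i : ℕ) from by omega,
          Nat.cast_sub (show 1 ≤ (i : ℕ) by omega)]
        push_cast
        rw [hkc]
        field_simp
        try ring
        field_simp
        ring
      · exfalso; omega
    · rw [if_neg hlast, dif_pos (show (i : ℕ) + 1 < k by omega)]
      simp only [hM, Fin.eta]
      by_cases hi0 : (i : ℕ) = 0
      · rw [dif_neg (by omega)]
        simp only [hi0]
        rcases Nat.eq_or_lt_of_le (Nat.zero_le (j : ℕ)) with hij | hij
        · have hj : (j : ℕ) = 0 := hij.symm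
          rw [if_pos (Fin.ext (by omega))]
          simp only [hj]
          push_cast
          field_simp
          try ring
          norm_num
          ring
        · rw [if_neg (by intro h; subst h; omega),
            show min (0 + 1) ((j : ℕ) + 1) = 1 from by omega,
            show min (0 + 1 + 1) ((j : ℕ) + 1) = 2 from by omega]
          push_cast
          field_simp
          try ring
      · rw [dif_pos (show 1 ≤ (i : ℕ) ∧ (i : ℕ) - 1 < k by omega)]
        have h1 : (i : ℕ) - 1 + 1 = (i : ℕ) := by omega
        simp only [h1]
        rw [Nat.cast_sub (show 1 ≤ (i : ℕ) by omega)]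
        rcases Nat.lt_trichotomy (j : ℕ) (i : ℕ) with hij | hij | hij
        · rw [if_neg (by intro h; subst h; omega),
            show min ((i : ℕ) + 1) ((j : ℕ) + 1) = (j : ℕ) + 1 from by omega,
            show min ((i : ℕ)) ((j : ℕ) + 1) = (j : ℕ) + 1 from by omega,
            show min ((i : ℕ) + 1 + 1) ((j : ℕ) + 1) = (j : ℕ) + 1 from by omega]
          push_cast
          field_simp
          try ring
        · have hj : (j : ℕ) = (i : ℕ) := hij
          rw [if_pos (Fin.ext hij.symm)]
          simp only [hj]
          rw [show min ((i : ℕ) + 1) ((i : ℕ) + 1) = (i : ℕ) + 1 from by omega,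
            show min ((i : ℕ)) ((i : ℕ) + 1) = (i : ℕ) from by omega,
            show min ((i : ℕ) + 1 + 1) ((i : ℕ) + 1) = (i : ℕ) + 1 from by omega]
          push_cast
          field_simp
          try ring
        · rw [if_neg (by intro h; subst h; omega),
            show min ((i : ℕ) + 1) ((j : ℕ) + 1) = (i : ℕ) + 1 from by omega,
            show min ((i : ℕ)) ((j : ℕ) + 1) = (i : ℕ) from by omega,
            show min ((i : ℕ) + 1 + 1) ((j : ℕ) + 1) = (i : ℕ) + 1 + 1 from by omega]
          push_cast
          field_simp
          try ring
  exact ⟨main, mul_eq_one_comm.mp main⟩
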